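/- Let G be a graph containing an induced cycle C of length t with t not equal to 3 or 5, and define the weight function w by w(e) = 2 for edges e of G[V(C)] and w(e) = 1 otherwise. Then sqrt(I(G_w) : prod_{v in V(C)} v) contains I(C) + (the neighbors of V(C) outside V(C)) and its generators involving only vertices of V(C) are exactly the edges of C. -/

import Mathlib

open MvPolynomial

open scoped Classical in
/-- Let `G` contain an induced cycle `C` of length `t ∉ {3,5}`
(given by the injective map `f`), and weight the edges of `G` by `2` inside
`G[V(C)]` and `1` elsewhere.  Then `√(I(G_w) : ∏_{v ∈ V(C)} v)` contains
`I(C)` together with all neighbours of `V(C)` outside `V(C)`, and its generators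
involving only vertices of `V(C)` are exactly the edges of `C`: no variable
`x_v`, `v ∈ V(C)`, lies in the radical, and a product `x_u x_v` with
`u, v ∈ V(C)` lies in it precisely when `uv` is an edge of `C`. -/
theorem stmt19 (K : Type*) [Field K] (n : ℕ) (G : SimpleGraph (Fin n))
    (t : ℕ) (ht : 3 ≤ t) (ht3 : t ≠ 3) (ht5 : t ≠ 5)
    (f : Fin t → Fin n) (hinj : Function.Injective f)
    (hcycle : ∀ i j : Fin t, G.Adj (f i) (f j) ↔
      (j.val = (i.val + 1) % t ∨ i.val = (j.val + 1) % t))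
    (R : Ideal (MvPolynomial (Fin n) K))
    (hR : R = (Submodule.colon
        (Ideal.span {p : MvPolynomial (Fin n) K | ∃ i j, G.Adj i j ∧
          p = (X i * X j) ^ (if i ∈ Set.range f ∧ j ∈ Set.range f then 2 else 1)})
        (Ideal.span {∏ i : Fin t, (X (f i) : MvPolynomial (Fin n) K)})).radical) :
    Ideal.span
        ({p : MvPolynomial (Fin n) K | ∃ i : Fin t,
            p = X (f i) * X (f ⟨(i.val + 1) % t, Nat.mod_lt _ i.pos⟩)}
          ∪ {p | ∃ j, j ∉ Set.range f ∧ (∃ i : Fin t, G.Adj (f i) j) ∧ p = X j}) ≤ R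
      ∧ (∀ i : Fin t, (X (f i) : MvPolynomial (Fin n) K) ∉ R)
      ∧ (∀ i j : Fin t, (X (f i) * X (f j) : MvPolynomial (Fin n) K) ∈ R ↔
          (j.val = (i.val + 1) % t ∨ i.val = (j.val + 1) % t)) := by
  classical
  have hX : ∀ v : Fin n, (X v : MvPolynomial (Fin n) K) = monomial (Finsupp.single v 1) 1 :=
    fun v => rfl
  set PE : Fin n →₀ ℕ := ∑ m : Fin t, Finsupp.single (f m) 1 with hPEdef
  have hPE1 : ∀ m : Fin t, PE (f m) = 1 := by
    intro m
    rw [hPEdef, Finsupp.finset_sum_apply]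
    simp [Finsupp.single_apply, hinj.eq_iff]
  have hPE0 : ∀ v, v ∉ Set.range f → PE v = 0 := by
    intro v hv
    rw [hPEdef, Finsupp.finset_sum_apply]
    refine Finset.sum_eq_zero fun m _ => ?_
    rw [Finsupp.single_apply, if_neg]
    exact fun h => hv ⟨m, h⟩
  have hprod : ∀ s : Finset (Fin t), (∏ m ∈ s, (X (f m) : MvPolynomial (Fin n) K)) =
      monomial (∑ m ∈ s, Finsupp.single (f m) 1) 1 := by
    intro s
    induction s using Finset.induction_on with
    | empty => simp
    | @insert a s hns ih =>
      rw [Finset.prod_insert hns, Finset.sum_insert hns, ih, hX, monomial_mul, one_mul]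
  have hP : (∏ i : Fin t, (X (f i) : MvPolynomial (Fin n) K)) = monomial PE 1 := hprod _
  have hsingle_le : ∀ m : Fin t, (Finsupp.single (f m) 1 : Fin n →₀ ℕ) ≤ PE := by
    intro m
    rw [Finsupp.le_def]
    intro v
    rw [Finsupp.single_apply]
    split_ifs with h
    · rw [← h, hPE1 m]
    · exact Nat.zero_le _
  have hpair : ∀ a b : Fin t, f a ≠ f b →
      (Finsupp.single (f a) 1 + Finsupp.single (f b) 1 : Fin n →₀ ℕ) ≤ PE := by
    intro a b hab
    rw [Finsupp.le_def]
    intro v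
    rw [Finsupp.add_apply, Finsupp.single_apply, Finsupp.single_apply]
    by_cases h1 : f a = v
    · subst h1
      rw [if_pos rfl, if_neg (fun h => hab h.symm), hPE1 a]
      omega
    · rw [if_neg h1]
      split_ifs with h2
      · subst h2
        rw [hPE1 b]
      · exact Nat.zero_le _
  have hXX : ∀ (i j : Fin n) (w : ℕ), ((X i * X j : MvPolynomial (Fin n) K)) ^ w =
      monomial (w • (Finsupp.single i 1 + Finsupp.single j 1)) 1 := by
    intro i j w
    rw [hX, hX, monomial_mul, one_mul, monomial_pow, one_pow]
  have hmono : ∀ e : Fin n →₀ ℕ,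
      ((monomial e (1 : K)) ∈ Ideal.span {p : MvPolynomial (Fin n) K | ∃ i j, G.Adj i j ∧
          p = (X i * X j) ^ (if i ∈ Set.range f ∧ j ∈ Set.range f then 2 else 1)} ↔
        ∃ i j, G.Adj i j ∧ (if i ∈ Set.range f ∧ j ∈ Set.range f then 2 else 1) •
          (Finsupp.single i 1 + Finsupp.single j 1) ≤ e) := by
    intro e
    have hset : {p : MvPolynomial (Fin n) K | ∃ i j, G.Adj i j ∧
        p = (X i * X j) ^ (if i ∈ Set.range f ∧ j ∈ Set.range f then 2 else 1)} =
        (fun s => monomial s (1 : K)) '' {d : Fin n →₀ ℕ | ∃ i j, G.Adj i j ∧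
          d = (if i ∈ Set.range f ∧ j ∈ Set.range f then 2 else 1) •
            (Finsupp.single i 1 + Finsupp.single j 1)} := by
      ext p
      simp only [Set.mem_setOf_eq, Set.mem_image]
      constructor
      · rintro ⟨i, j, hadj, rfl⟩
        exact ⟨_, ⟨i, j, hadj, rfl⟩, (hXX i j _).symm⟩
      · rintro ⟨d, ⟨i, j, hadj, rfl⟩, rfl⟩
        exact ⟨i, j, hadj, (hXX i j _).symm⟩
    rw [hset, mem_ideal_span_monomial_image]
    rw [support_monomial, if_neg (one_ne_zero : (1 : K) ≠ 0)]
    simp only [Finset.mem_singleton, forall_eq, Set.mem_setOf_eq]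
    constructor
    · rintro ⟨si, ⟨i, j, hadj, rfl⟩, hle⟩
      exact ⟨i, j, hadj, hle⟩
    · rintro ⟨i, j, hadj, hle⟩
      exact ⟨_, ⟨i, j, hadj, rfl⟩, hle⟩
  have hkey : ∀ (e : Fin n →₀ ℕ), (∀ v, v ∉ Set.range f → e v = 0) →
      ∀ i j : Fin n, G.Adj i j →
      (if i ∈ Set.range f ∧ j ∈ Set.range f then 2 else 1) •
        (Finsupp.single i 1 + Finsupp.single j 1) ≤ e →
      ∃ a b : Fin t, G.Adj (f a) (f b) ∧ a ≠ b ∧ 2 ≤ e (f a) ∧ 2 ≤ e (f b) := by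
    intro e h0 i j hadj hle
    have hne : i ≠ j := hadj.ne
    rw [Finsupp.le_def] at hle
    have hsi : ((if i ∈ Set.range f ∧ j ∈ Set.range f then 2 else 1) •
        (Finsupp.single i 1 + Finsupp.single j 1) : Fin n →₀ ℕ) i =
        (if i ∈ Set.range f ∧ j ∈ Set.range f then 2 else 1) := by
      rw [Finsupp.smul_apply, Finsupp.add_apply, Finsupp.single_eq_same,
        Finsupp.single_eq_of_ne' hne.symm, add_zero, smul_eq_mul, mul_one]
    have hsj : ((if i ∈ Set.range f ∧ j ∈ Set.range f then 2 else 1) •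
        (Finsupp.single i 1 + Finsupp.single j 1) : Fin n →₀ ℕ) j =
        (if i ∈ Set.range f ∧ j ∈ Set.range f then 2 else 1) := by
      rw [Finsupp.smul_apply, Finsupp.add_apply, Finsupp.single_eq_same,
        Finsupp.single_eq_of_ne' hne, zero_add, smul_eq_mul, mul_one]
    have hiR : i ∈ Set.range f := by
      by_contra hiR
      have h2 := hle i
      rw [hsi, h0 i hiR] at h2
      split_ifs at h2 <;> omega
    have hjR : j ∈ Set.range f := by
      by_contra hjR
      have h2 := hle j
      rw [hsj, h0 j hjR] at h2
      split_ifs at h2 <;> omega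
    have hcond : i ∈ Set.range f ∧ j ∈ Set.range f := ⟨hiR, hjR⟩
    obtain ⟨a, rfl⟩ := hiR
    obtain ⟨b, rfl⟩ := hjR
    refine ⟨a, b, hadj, fun h => hne (by rw [h]), ?_, ?_⟩
    · have h2 := hle (f a); rw [hsi, if_pos hcond] at h2; exact h2
    · have h2 := hle (f b); rw [hsj, if_pos hcond] at h2; exact h2
  -- edges of the cycle lie in R
  have hedge : ∀ a b : Fin t, b.val = (a.val + 1) % t →
      (X (f a) * X (f b) : MvPolynomial (Fin n) K) ∈ R := by
    intro a b hab
    have hadj : G.Adj (f a) (f b) := (hcycle a b).mpr (Or.inl hab)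
    have hne : f a ≠ f b := hadj.ne
    rw [hR]
    refine Ideal.le_radical ?_
    rw [Ideal.mem_colon_span_singleton, hP, hX (f a), hX (f b), monomial_mul,
      one_mul, monomial_mul, one_mul, hmono]
    refine ⟨f a, f b, hadj, ?_⟩
    rw [if_pos ⟨⟨a, rfl⟩, ⟨b, rfl⟩⟩, two_smul]
    exact add_le_add_right (hpair a b hne) _
  refine ⟨?_, ?_, ?_⟩
  · rw [Ideal.span_le]
    intro p hp
    rcases hp with ⟨i, rfl⟩ | ⟨j, hjR, ⟨i, hadj⟩, rfl⟩
    · exact hedge i _ rfl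
    · rw [hR]
      refine Ideal.le_radical ?_
      rw [Ideal.mem_colon_span_singleton, hP, hX j, monomial_mul, one_mul, hmono]
      refine ⟨f i, j, hadj, ?_⟩
      rw [if_neg (fun h => hjR h.2), one_smul, add_comm (Finsupp.single (f i) 1)]
      exact add_le_add_right (hsingle_le i) _
  · intro i hiR
    rw [hR, Ideal.mem_radical_iff] at hiR
    obtain ⟨k, hk⟩ := hiR
    rw [Ideal.mem_colon_span_singleton, hP, X_pow_eq_monomial, monomial_mul, one_mul, hmono] at hk
    obtain ⟨a, b, hadj, hle⟩ := hk
    have h0 : ∀ v, v ∉ Set.range f → (Finsupp.single (f i) k + PE) v = 0 := by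
      intro v hv
      rw [Finsupp.add_apply, hPE0 v hv, Finsupp.single_apply, if_neg (fun h => hv ⟨i, h⟩),
        add_zero]
    obtain ⟨a', b', hadj', hne', h2a, h2b⟩ := hkey _ h0 a b hadj hle
    have hforce : ∀ m : Fin t, 2 ≤ (Finsupp.single (f i) k + PE) (f m) → m = i := by
      intro m hm
      by_contra hc
      rw [Finsupp.add_apply, hPE1 m, Finsupp.single_apply,
        if_neg (fun h => hc (hinj h).symm)] at hm
      omega
    exact hne' ((hforce a' h2a).trans (hforce b' h2b).symm)
  · intro i j
    constructor
    · intro hmem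
      rw [hR, Ideal.mem_radical_iff] at hmem
      obtain ⟨k, hk⟩ := hmem
      rw [Ideal.mem_colon_span_singleton, hP, hX (f i), hX (f j), monomial_mul, one_mul,
        monomial_pow, one_pow, monomial_mul, one_mul, hmono] at hk
      obtain ⟨a, b, hadj, hle⟩ := hk
      have h0 : ∀ v, v ∉ Set.range f →
          ((k • (Finsupp.single (f i) 1 + Finsupp.single (f j) 1) + PE : Fin n →₀ ℕ)) v = 0 := by
        intro v hv
        rw [Finsupp.add_apply, hPE0 v hv, Finsupp.smul_apply, Finsupp.add_apply,
          Finsupp.single_apply, Finsupp.single_apply, if_neg (fun h => hv ⟨i, h⟩),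
          if_neg (fun h => hv ⟨j, h⟩)]
        simp
      obtain ⟨a', b', hadj', hne', h2a, h2b⟩ := hkey _ h0 a b hadj hle
      have hforce : ∀ m : Fin t,
          2 ≤ ((k • (Finsupp.single (f i) 1 + Finsupp.single (f j) 1) + PE : Fin n →₀ ℕ)) (f m) →
          m = i ∨ m = j := by
        intro m hm
        by_contra hc
        push_neg at hc
        rw [Finsupp.add_apply, hPE1 m, Finsupp.smul_apply, Finsupp.add_apply,
          Finsupp.single_apply, Finsupp.single_apply,
          if_neg (fun h => hc.1 (hinj h).symm), if_neg (fun h => hc.2 (hinj h).symm)] at hm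
        simp at hm
      rcases hforce a' h2a with rfl | rfl <;> rcases hforce b' h2b with rfl | rfl
      · exact absurd rfl hne'
      · exact (hcycle a' b').mp hadj'
      · exact ((hcycle a' b').mp hadj').symm
      · exact absurd rfl hne'
    · intro hcyc
      rcases hcyc with h | h
      · exact hedge i j h
      · rw [mul_comm]
        exact hedge j i h
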